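/- Any randomized ABC rule assigning winning probability proportional to e^{ε/2} to committees satisfying axiom 𝒜 ∈ {JR, PJR, EJR} and proportional to 1 to the rest satisfies ε-DP and e^{ε/2}-𝒜 (i.e., every 𝒜-committee has probability at least e^{ε/2} times that of every non-𝒜-committee). -/
import Mathlib


open scoped Classical

noncomputable section

/-- A profile assigns to each of the `n` voters an approval ballot (a finite set of alternatives). -/
abbrev Profile (A : Type) (n : ℕ) := Fin n → Finset A

/-- Two profiles are neighboring if they differ in at most one voter's ballot. -/
def Neighboring {A : Type} {n : ℕ} (P P' : Profile A n) : Prop :=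
  ∃ i : Fin n, ∀ j : Fin n, j ≠ i → P j = P' j

/-- `W'` Pareto-dominates `W` in profile `P`. -/
def ParetoDom {A : Type} [DecidableEq A] {n : ℕ} (P : Profile A n) (W' W : Finset A) : Prop :=
  (∀ i, (W ∩ P i).card ≤ (W' ∩ P i).card) ∧ (∃ i, (W ∩ P i).card < (W' ∩ P i).card)

/-- The set of alternatives approved by every voter in `V`. -/
def commonApproved {A : Type} [Fintype A] {n : ℕ} (P : Profile A n) (V : Finset (Fin n)) :
    Finset A :=
  Finset.univ.filter (fun a => ∀ i ∈ V, a ∈ P i)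

/-- `V` is an `ℓ`-cohesive group for `(P, k)`: `|V| ≥ ℓ·n/k` and `|⋂_{i∈V} P i| ≥ ℓ`. -/
def Cohesive {A : Type} [Fintype A] {n : ℕ} (P : Profile A n) (k ℓ : ℕ)
    (V : Finset (Fin n)) : Prop :=
  ℓ * n ≤ V.card * k ∧ ℓ ≤ (commonApproved P V).card

/-- Committee `W` (of size `k`) satisfies justified representation for `(P, k)`. -/
def JRsat {A : Type} [Fintype A] [DecidableEq A] {n : ℕ} (P : Profile A n) (k : ℕ)
    (W : Finset A) : Prop :=
  W.card = k ∧ ∀ V : Finset (Fin n), Cohesive P k 1 V → ∃ i ∈ V, (P i ∩ W).Nonempty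

/-- Committee `W` satisfies proportional justified representation for `(P, k)`. -/
def PJRsat {A : Type} [Fintype A] [DecidableEq A] {n : ℕ} (P : Profile A n) (k : ℕ)
    (W : Finset A) : Prop :=
  W.card = k ∧ ∀ (ℓ : ℕ) (V : Finset (Fin n)), 1 ≤ ℓ → Cohesive P k ℓ V →
    ℓ ≤ (W ∩ V.biUnion P).card

/-- Committee `W` satisfies extended justified representation for `(P, k)`. -/
def EJRsat {A : Type} [Fintype A] [DecidableEq A] {n : ℕ} (P : Profile A n) (k : ℕ)
    (W : Finset A) : Prop :=
  W.card = k ∧ ∀ (ℓ : ℕ) (V : Finset (Fin n)), 1 ≤ ℓ → Cohesive P k ℓ V →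
    ∃ i ∈ V, ℓ ≤ (P i ∩ W).card

/-- `W` is a Condorcet committee for `(P, k)`: against every other size-`k` committee,
strictly more than half of the voters prefer `W`. -/
def CondorcetCommittee {A : Type} [Fintype A] [DecidableEq A] {n : ℕ} (P : Profile A n)
    (k : ℕ) (W : Finset A) : Prop :=
  W.card = k ∧ ∀ W' : Finset A, W'.card = k → W' ≠ W →
    n < 2 * (Finset.univ.filter
      (fun i : Fin n => (P i ∩ W').card < (P i ∩ W).card)).card

/-- A randomized approval-based committee (ABC) rule: for each profile and committee size `k`,
a probability distribution over the size-`k` committees. -/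
structure ABCRule (A : Type) [Fintype A] [DecidableEq A] (n : ℕ) where
  prob : Profile A n → ℕ → Finset A → ℝ
  nonneg : ∀ P k W, 0 ≤ prob P k W
  size_eq : ∀ P k W, prob P k W ≠ 0 → W.card = k
  sum_one : ∀ P k, k ≤ Fintype.card A →
    ∑ W ∈ Finset.univ.filter (fun W : Finset A => W.card = k), prob P k W = 1

variable {A : Type} [Fintype A] [DecidableEq A] {n : ℕ}

/-- ε-differential privacy at committee size `k`. -/
def DPAt (f : ABCRule A n) (k : ℕ) (ε : ℝ) : Prop :=
  ∀ (P P' : Profile A n) (W : Finset A),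
    Neighboring P P' → f.prob P k W ≤ Real.exp ε * f.prob P' k W

/-- ε-differential privacy: single-ballot changes alter each committee's winning
probability by a factor of at most `e^ε`. -/
def DP (f : ABCRule A n) (ε : ℝ) : Prop := ∀ k : ℕ, DPAt f k ε

/-- Neutrality: the rule commutes with permutations of the alternatives. -/
def Neutral (f : ABCRule A n) : Prop :=
  ∀ (σ : Equiv.Perm A) (P : Profile A n) (k : ℕ) (W : Finset A),
    f.prob (fun i => (P i).image σ) k (W.image σ) = f.prob P k W

/-- θ-JR: each JR committee wins with probability at least θ times that of each non-JR one. -/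
def ThetaJR (f : ABCRule A n) (θ : ℝ) : Prop :=
  ∀ (P : Profile A n) (k : ℕ) (W₁ W₂ : Finset A),
    JRsat P k W₁ → W₂.card = k → ¬ JRsat P k W₂ →
      θ * f.prob P k W₂ ≤ f.prob P k W₁

/-- ρ-PJR. -/
def RhoPJR (f : ABCRule A n) (ρ : ℝ) : Prop :=
  ∀ (P : Profile A n) (k : ℕ) (W₁ W₂ : Finset A),
    PJRsat P k W₁ → W₂.card = k → ¬ PJRsat P k W₂ →
      ρ * f.prob P k W₂ ≤ f.prob P k W₁

/-- κ-EJR. -/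
def KappaEJR (f : ABCRule A n) (κ : ℝ) : Prop :=
  ∀ (P : Profile A n) (k : ℕ) (W₁ W₂ : Finset A),
    EJRsat P k W₁ → W₂.card = k → ¬ EJRsat P k W₂ →
      κ * f.prob P k W₂ ≤ f.prob P k W₁

/-- Exact Condorcet criterion: whenever a Condorcet committee exists, it wins with
probability one. -/
def CondorcetCrit (f : ABCRule A n) : Prop :=
  ∀ (P : Profile A n) (k : ℕ) (W : Finset A),
    CondorcetCommittee P k W → f.prob P k W = 1

/-- η-Condorcet criterion. -/
def EtaCC (f : ABCRule A n) (η : ℝ) : Prop :=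
  ∀ (P : Profile A n) (k : ℕ) (Wc W : Finset A),
    CondorcetCommittee P k Wc → W.card = k → W ≠ Wc →
      η * f.prob P k W ≤ f.prob P k Wc

/-- Exact Pareto efficiency at committee size `k`: no committee in the support is
Pareto-dominated by another size-`k` committee. -/
def ParetoEffAt (f : ABCRule A n) (k : ℕ) : Prop :=
  ∀ (P : Profile A n) (W : Finset A), f.prob P k W ≠ 0 →
    ∀ W' : Finset A, W'.card = k → ¬ ParetoDom P W' W

/-- β-Pareto efficiency at committee size `k`. -/
def BetaPEAt (f : ABCRule A n) (k : ℕ) (β : ℝ) : Prop :=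
  ∀ (P : Profile A n) (W₁ W₂ : Finset A), W₁.card = k → W₂.card = k →
    ParetoDom P W₁ W₂ → β * f.prob P k W₂ ≤ f.prob P k W₁

/-- The approval voting score of a committee. -/
def AV (P : Profile A n) (W : Finset A) : ℕ := ∑ j, (P j ∩ W).card

/-- The set of size-`k` committees satisfying JR for `(P, k)`. -/
def JRset (P : Profile A n) (k : ℕ) : Finset (Finset A) :=
  Finset.univ.filter (fun W => JRsat P k W)

/-- For any axiom 𝒜 ∈ {JR, PJR, EJR}, the rule assigning probability
proportional to e^{ε/2} to 𝒜-committees and to 1 to the other size-k committees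
satisfies ε-DP and e^{ε/2}-𝒜. -/
theorem randomizedResponse_axiom (Ax : Profile A n → ℕ → Finset A → Prop)
    (hAx : Ax = (JRsat : Profile A n → ℕ → Finset A → Prop) ∨
           Ax = (PJRsat : Profile A n → ℕ → Finset A → Prop) ∨
           Ax = (EJRsat : Profile A n → ℕ → Finset A → Prop))
    (f : ABCRule A n) (ε : ℝ) (hε : 0 < ε)
    (hf : ∀ (P : Profile A n) (k : ℕ) (W : Finset A), W.card = k →
      f.prob P k W =
        (if Ax P k W then Real.exp (ε / 2) else 1) /
          (((Finset.univ.filter (fun W' : Finset A => Ax P k W')).card : ℝ) *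
              Real.exp (ε / 2) +
            ((Nat.choose (Fintype.card A) k : ℝ) -
              ((Finset.univ.filter (fun W' : Finset A => Ax P k W')).card : ℝ)))) :
    DP f ε ∧
      ∀ (P : Profile A n) (k : ℕ) (W₁ W₂ : Finset A),
        Ax P k W₁ → W₂.card = k → ¬ Ax P k W₂ →
          Real.exp (ε / 2) * f.prob P k W₂ ≤ f.prob P k W₁ := by

  classical
  have cardAx : ∀ (P : Profile A n) (k : ℕ) (W : Finset A), Ax P k W → W.card = k := by
    rcases hAx with h | h | h <;> subst h <;> intro P k W hW <;> exact hW.1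
  set e := Real.exp (ε / 2) with he
  have he1 : 1 ≤ e := Real.one_le_exp (by linarith)
  have hee : e * e = Real.exp ε := by
    rw [he, ← Real.exp_add]; ring_nf
  -- key facts for a profile and valid k
  have key : ∀ (P : Profile A n) (k : ℕ), k ≤ Fintype.card A →
      ((Finset.univ.filter (fun W' : Finset A => Ax P k W')).card : ℝ) ≤
        ((Fintype.card A).choose k : ℝ) ∧
      (1 : ℝ) ≤ ((Fintype.card A).choose k : ℝ) := by
    intro P k hk
    constructor
    · have hsub : (Finset.univ.filter (fun W' : Finset A => Ax P k W')) ⊆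
          (Finset.univ.filter (fun W' : Finset A => W'.card = k)) := by
        intro x hx
        simp only [Finset.mem_filter, Finset.mem_univ, true_and] at hx ⊢
        exact cardAx P k x hx
      have hcount : (Finset.univ.filter (fun W' : Finset A => W'.card = k)).card =
          (Fintype.card A).choose k := by
        have : (Finset.univ.filter (fun W' : Finset A => W'.card = k)) =
            Finset.powersetCard k (Finset.univ : Finset A) := by
          rw [Finset.powersetCard_eq_filter, Finset.powerset_univ]
        rw [this, Finset.card_powersetCard, Finset.card_univ]
      have := Finset.card_le_card hsub
      rw [hcount] at this
      exact_mod_cast this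
    · exact_mod_cast Nat.succ_le_of_lt (Nat.choose_pos hk)
  constructor
  · intro k P P' W _
    by_cases hW : W.card = k
    · have hk : k ≤ Fintype.card A := by
        rw [← hW, ← Finset.card_univ]; exact Finset.card_le_univ W
      rw [hf P k W hW, hf P' k W hW]
      set m := ((Finset.univ.filter (fun W' : Finset A => Ax P k W')).card : ℝ) with hm
      set m' := ((Finset.univ.filter (fun W' : Finset A => Ax P' k W')).card : ℝ) with hm'
      set C := (((Fintype.card A).choose k : ℕ) : ℝ) with hC
      obtain ⟨hmC, hC1⟩ := key P k hk
      obtain ⟨hm'C, _⟩ := key P' k hk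
      have hm0 : (0:ℝ) ≤ m := Nat.cast_nonneg _
      have hm'0 : (0:ℝ) ≤ m' := Nat.cast_nonneg _
      have hD : (0:ℝ) < m * e + (C - m) := by nlinarith
      have hD' : (0:ℝ) < m' * e + (C - m') := by nlinarith
      set a := (if Ax P k W then e else 1) with ha
      set b := (if Ax P' k W then e else 1) with hb
      have hab : a ≤ e * b := by
        rw [ha, hb]; split_ifs <;> nlinarith
      have hDD : m' * e + (C - m') ≤ e * (m * e + (C - m)) := by
        nlinarith [mul_nonneg (sub_nonneg.mpr hm'C) (sub_nonneg.mpr he1),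
          mul_nonneg (mul_nonneg hm0 (by linarith : (0:ℝ) ≤ e)) (sub_nonneg.mpr he1)]
      have ha0 : (0:ℝ) ≤ a := by rw [ha]; split_ifs <;> linarith
      have hb0 : (0:ℝ) ≤ b := by rw [hb]; split_ifs <;> linarith
      rw [← mul_div_assoc, div_le_div_iff₀ hD hD']
      calc a * (m' * e + (C - m')) ≤ (e * b) * (e * (m * e + (C - m))) := by
            apply mul_le_mul hab hDD (le_of_lt hD')
            positivity
        _ = Real.exp ε * b * (m * e + (C - m)) := by rw [← hee]; ring
    · have h0 : f.prob P k W = 0 := by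
        by_contra h
        exact hW (f.size_eq P k W h)
      rw [h0]
      exact mul_nonneg (Real.exp_pos ε).le (f.nonneg P' k W)
  · intro P k W₁ W₂ h1 h2 h3
    have hW1 : W₁.card = k := cardAx P k W₁ h1
    rw [hf P k W₁ hW1, hf P k W₂ h2, if_pos h1, if_neg h3]
    exact le_of_eq (mul_one_div _ _)
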